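/- Let u be a nonconstant inner function and let φ ∈ L∞(𝕋) satisfy |φ| = 1 a.e. Then: (1) if φ = ψ̄ for some ψ ∈ H∞, then m(D_φ) = √(1 − ‖T_{ūψ}|_{K_u}‖²); (2) if T_{\overline{uφ}} f = 0 for every f ∈ K_u, then m(D_φ) = √(1 − ‖H_{φ̄}|_{K_u}‖²); (3) if there exists a unit vector f₀ ∈ K_u with ‖T_{\overline{uφ}} f₀‖ = ‖T_{\overline{uφ}}|_{K_u}‖ and ‖H_{φ̄} f₀‖ = ‖H_{φ̄}|_{K_u}‖, then m(D_φ) = √( 1 − (‖T_{\overline{uφ}}|_{K_u}‖² + ‖H_{φ̄}|_{K_u}‖²) ). -/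

import Mathlib

open MeasureTheory Complex
open scoped InnerProductSpace ENNReal

noncomputable section

namespace DTTO

instance fact2pi : Fact (0 < 2 * Real.pi) := ⟨by positivity⟩

/-- The circle, realized as `ℝ / 2πℤ`. -/
abbrev 𝕋c := AddCircle (2 * Real.pi)

/-- Normalized Haar (Lebesgue) measure on the circle. -/
abbrev μT : Measure 𝕋c := AddCircle.haarAddCircle

/-- `L²(𝕋)`. -/
abbrev L2 := Lp ℂ 2 μT

/-- `L∞(𝕋)`. -/
abbrev Linf := Lp ℂ ⊤ μT

lemma memL2_smul (φ : Linf) (f : L2) : MemLp (⇑φ • ⇑f) 2 μT :=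
  (Lp.memLp f).smul (Lp.memLp φ)

/-- Multiplication operator `M_φ : L² → L²` by a function `φ ∈ L∞`. -/
def Mmul (φ : Linf) : L2 →L[ℂ] L2 :=
  LinearMap.mkContinuous
    { toFun := fun f => (memL2_smul φ f).toLp _
      map_add' := fun f g => by
        refine Lp.ext ?_
        filter_upwards [MemLp.coeFn_toLp (memL2_smul φ (f + g)),
          MemLp.coeFn_toLp (memL2_smul φ f), MemLp.coeFn_toLp (memL2_smul φ g),
          Lp.coeFn_add f g,
          Lp.coeFn_add ((memL2_smul φ f).toLp _) ((memL2_smul φ g).toLp _)] with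
            x h1 h2 h3 h4 h5
        rw [h1, h5]
        simp only [Pi.add_apply, h2, h3]
        simp only [Pi.smul_apply', h4, Pi.add_apply, smul_add]
      map_smul' := fun c f => by
        refine Lp.ext ?_
        filter_upwards [MemLp.coeFn_toLp (memL2_smul φ (c • f)),
          MemLp.coeFn_toLp (memL2_smul φ f),
          Lp.coeFn_smul c f,
          Lp.coeFn_smul c ((memL2_smul φ f).toLp _)] with x h1 h2 h3 h4
        rw [h1, RingHom.id_apply, h4]
        simp only [Pi.smul_apply, Pi.smul_apply', h2, h3]
        exact smul_comm _ _ _ }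
    ‖φ‖ (fun f => by
      simp only [LinearMap.coe_mk, AddHom.coe_mk]
      rw [Lp.norm_toLp, Lp.norm_def, Lp.norm_def]
      rw [← ENNReal.toReal_mul]
      refine ENNReal.toReal_mono ?_ ?_
      · exact ENNReal.mul_ne_top (Lp.eLpNorm_ne_top φ) (Lp.eLpNorm_ne_top f)
      · exact eLpNorm_smul_le_eLpNorm_top_mul_eLpNorm 2 (Lp.aestronglyMeasurable f) ⇑φ)

/-- The canonical inclusion `L∞ ⊆ L²` (the measure is finite). -/
def toL2 (φ : Linf) : L2 := ((Lp.memLp φ).mono_exponent le_top).toLp _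

/-- The Hardy space `H²`, the closed linear span in `L²` of the exponentials `e_n`, `n ≥ 0`. -/
def H2 : Submodule ℂ L2 :=
  (Submodule.span ℂ (Set.range fun n : ℕ => (fourierLp 2 (n : ℤ) : L2))).topologicalClosure

instance : CompleteSpace H2 := (Submodule.isClosed_topologicalClosure _).completeSpace_coe

/-- `H²₋ = L² ⊖ H²`. -/
def Hminus : Submodule ℂ L2 := H2ᗮ

instance : CompleteSpace Hminus := (Submodule.isClosed_orthogonal _).completeSpace_coe

/-- `H∞ = H² ∩ L∞`. -/
def MemHinf (φ : Linf) : Prop := toL2 φ ∈ H2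

/-- An inner function: an element of `H² ∩ L∞` of modulus one a.e. -/
structure IsInnerFn (u : Linf) : Prop where
  memH2 : MemHinf u
  unimod : ∀ᵐ z ∂μT, ‖u z‖ = 1

/-- `u` is nonconstant (not a.e. equal to a constant). -/
def Nonconst (u : Linf) : Prop := ¬ ∃ c : ℂ, (⇑u : 𝕋c → ℂ) =ᵐ[μT] fun _ => c

/-- The subspace `uH²` of `L²`. -/
def uH2 (u : Linf) : Submodule ℂ L2 := H2.map (Mmul u).toLinearMap

/-- The model space `K_u = H² ⊖ uH² = H² ∩ (uH²)ᗮ`. -/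
def Ku (u : Linf) : Submodule ℂ L2 := H2 ⊓ (uH2 u)ᗮ

lemma isClosed_Ku (u : Linf) : IsClosed ((Ku u : Set L2)) := by
  have h : (Ku u : Set L2) = (H2 : Set L2) ∩ ((uH2 u)ᗮ : Set L2) := rfl
  rw [h]
  exact (Submodule.isClosed_topologicalClosure _).inter (Submodule.isClosed_orthogonal _)

instance (u : Linf) : CompleteSpace (Ku u) := (isClosed_Ku u).completeSpace_coe

/-- `K_u^⊥ = L² ⊖ K_u`. -/
def KuP (u : Linf) : Submodule ℂ L2 := (Ku u)ᗮ

instance (u : Linf) : CompleteSpace (KuP u) := (Submodule.isClosed_orthogonal _).completeSpace_coe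

/-- Dual truncated Toeplitz operator `D_φ` on `K_u^⊥`. -/
def Dop (u φ : Linf) : KuP u →L[ℂ] KuP u :=
  (KuP u).orthogonalProjectionOnto ∘L Mmul φ ∘L (KuP u).subtypeL

/-- Truncated Toeplitz operator `A_φ` on `K_u`. -/
def Aop (u φ : Linf) : Ku u →L[ℂ] Ku u :=
  (Ku u).orthogonalProjectionOnto ∘L Mmul φ ∘L (Ku u).subtypeL

/-- The operator `B_φ : K_u → K_u^⊥`, `B_φ f = (I - P_{K_u})(φ f)`. -/
def Bop (u φ : Linf) : Ku u →L[ℂ] KuP u :=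
  (KuP u).orthogonalProjectionOnto ∘L Mmul φ ∘L (Ku u).subtypeL

/-- Toeplitz operator `T_φ : H² → H²`. -/
def Top (φ : Linf) : H2 →L[ℂ] H2 :=
  H2.orthogonalProjectionOnto ∘L Mmul φ ∘L H2.subtypeL

/-- Hankel operator `H_φ : H² → H²₋`. -/
def Hop (φ : Linf) : H2 →L[ℂ] Hminus :=
  Hminus.orthogonalProjectionOnto ∘L Mmul φ ∘L H2.subtypeL

/-- The exponential `e₁(ζ) = ζ` as an element of `L∞`. -/
def e1 : Linf := fourierLp ⊤ 1

/-- The exponential `e₋₁(ζ) = ζ̄` as an element of `L∞`. -/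
def eneg1 : Linf := fourierLp ⊤ (-1)

/-- The operator `Q : H²₋ → H²₋`, `Q g = P₋(e₁ g)`. -/
def Qop : Hminus →L[ℂ] Hminus :=
  Hminus.orthogonalProjectionOnto ∘L Mmul e1 ∘L Hminus.subtypeL

/-- `u(0)`, the 0-th Fourier coefficient. -/
def coef0 (u : Linf) : ℂ := fourierCoeff (⇑u) 0

/-- Minimum modulus of a bounded operator. -/
def minMod {E F : Type*} [NormedAddCommGroup E] [NormedSpace ℂ E]
    [NormedAddCommGroup F] [NormedSpace ℂ F] (T : E →L[ℂ] F) : ℝ :=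
  ⨅ x : {x : E // ‖x‖ = 1}, ‖T x.1‖

/-- Complex conjugation on `L∞`. -/
lemma memLinf_star (φ : Linf) : MemLp (fun z => (starRingEnd ℂ) (φ z)) ⊤ μT := by
  refine ⟨continuous_star.comp_aestronglyMeasurable (Lp.aestronglyMeasurable φ), ?_⟩
  rw [eLpNorm_congr_norm_ae (g := ⇑φ) (Filter.Eventually.of_forall fun z => norm_star _)]
  exact Lp.eLpNorm_lt_top φ

/-- The complex conjugate `φ̄ ∈ L∞` of `φ ∈ L∞`. -/
def conjL (φ : Linf) : Linf := (memLinf_star φ).toLp _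

lemma memLinf_mul (φ ψ : Linf) : MemLp (⇑φ • ⇑ψ) ⊤ μT :=
  (Lp.memLp ψ).smul (Lp.memLp φ)

/-- The pointwise product of two elements of `L∞`. -/
def mulL (φ ψ : Linf) : Linf := (memLinf_mul φ ψ).toLp _

end DTTO

namespace DTTO

lemma inner_fourierLp_eq_zero {m n : ℤ} (h : m ≠ n) :
    (inner ℂ (fourierLp 2 m : L2) (fourierLp 2 n : L2) : ℂ) = 0 := by
  have hcoe := congrFun (coe_fourierBasis (T := 2 * Real.pi))
  have h2 := (fourierBasis (T := 2 * Real.pi)).orthonormal.2 (i := m) (j := n) h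
  simpa only [hcoe] using h2

lemma span_le_orth_em1 :
    Submodule.span ℂ (Set.range fun n : ℕ => (fourierLp 2 (n : ℤ) : L2))
      ≤ (ℂ ∙ (fourierLp 2 (-1) : L2))ᗮ := by
  rw [Submodule.span_le]
  rintro x ⟨n, rfl⟩
  rw [SetLike.mem_coe, Submodule.mem_orthogonal]
  intro w hw
  obtain ⟨c, rfl⟩ := Submodule.mem_span_singleton.1 hw
  rw [inner_smul_left, inner_fourierLp_eq_zero (by omega : (-1 : ℤ) ≠ (n : ℤ)), mul_zero]

lemma H2_le_orth_em1 : H2 ≤ (ℂ ∙ (fourierLp 2 (-1) : L2))ᗮ :=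
  Submodule.topologicalClosure_minimal _ span_le_orth_em1 (Submodule.isClosed_orthogonal _)

/-- `e₋₁ ∈ H²₋`. -/
lemma em1_mem : (fourierLp 2 (-1) : L2) ∈ Hminus := by
  unfold Hminus
  rw [Submodule.mem_orthogonal]
  intro v hv
  have h := H2_le_orth_em1 hv
  rw [Submodule.mem_orthogonal] at h
  exact inner_eq_zero_symm.mp (h _ (Submodule.mem_span_singleton_self _))

/-- `e₋₁` as an element of `H²₋`. -/
def em1 : Hminus := ⟨(fourierLp 2 (-1) : L2), em1_mem⟩

/-- For `f ∈ K_u`, the function `u f ∈ uH² ⊆ K_u^⊥`. -/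
lemma mul_mem_KuP (u : Linf) (f : Ku u) : Mmul u (f : L2) ∈ KuP u := by
  unfold KuP
  rw [Submodule.mem_orthogonal]
  intro v hv
  have hv2 : v ∈ (uH2 u)ᗮ := (Submodule.mem_inf.1 hv).2
  have hm : Mmul u (f : L2) ∈ uH2 u :=
    Submodule.mem_map_of_mem (Submodule.mem_inf.1 f.2).1
  rw [Submodule.mem_orthogonal] at hv2
  exact inner_eq_zero_symm.mp (hv2 _ hm)

lemma Ku_le_H2 (u : Linf) : Ku u ≤ H2 := inf_le_left

/-- The inclusion `K_u ⊆ H²` as a continuous linear map. -/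
def KuIncl (u : Linf) : Ku u →L[ℂ] H2 :=
  LinearMap.mkContinuous (Submodule.inclusion (Ku_le_H2 u)) 1
    (fun f => by rw [one_mul]; exact le_of_eq rfl)

end DTTO

namespace DTTO

lemma coeFn_Mmul (φ : Linf) (f : L2) : ⇑(Mmul φ f) =ᵐ[μT] ⇑φ • ⇑f :=
  MemLp.coeFn_toLp (memL2_smul φ f)

lemma coeFn_conjL (φ : Linf) : ⇑(conjL φ) =ᵐ[μT] fun z => (starRingEnd ℂ) (φ z) :=
  MemLp.coeFn_toLp _

lemma coeFn_mulL (φ ψ : Linf) : ⇑(mulL φ ψ) =ᵐ[μT] ⇑φ • ⇑ψ :=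
  MemLp.coeFn_toLp _

lemma coeFn_toL2 (φ : Linf) : ⇑(toL2 φ) =ᵐ[μT] ⇑φ :=
  MemLp.coeFn_toLp _

lemma norm_Mmul_eq (u : Linf) (hu : ∀ᵐ z ∂μT, ‖u z‖ = 1) (f : L2) :
    ‖Mmul u f‖ = ‖f‖ := by
  have h : eLpNorm ⇑(Mmul u f) 2 μT = eLpNorm ⇑f 2 μT := by
    refine (eLpNorm_congr_ae (coeFn_Mmul u f)).trans (eLpNorm_congr_norm_ae ?_)
    filter_upwards [hu] with z hz
    simp [norm_smul, hz]
  rw [Lp.norm_def, Lp.norm_def, h]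

lemma inner_Mmul_left (φ : Linf) (f g : L2) :
    (inner ℂ (Mmul φ f) g : ℂ) = inner ℂ f (Mmul (conjL φ) g) := by
  rw [MeasureTheory.L2.inner_def, MeasureTheory.L2.inner_def]
  refine integral_congr_ae ?_
  filter_upwards [coeFn_Mmul φ f, coeFn_Mmul (conjL φ) g, coeFn_conjL φ] with z h1 h2 h3
  rw [h1, h2]
  simp only [Pi.smul_apply, smul_eq_mul, Pi.mul_apply, RCLike.inner_apply, h3, map_mul]
  ring

lemma Mmul_Mmul (φ ψ : Linf) (f : L2) : Mmul φ (Mmul ψ f) = Mmul (mulL φ ψ) f := by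
  refine Lp.ext ?_
  filter_upwards [coeFn_Mmul φ (Mmul ψ f), coeFn_Mmul ψ f, coeFn_Mmul (mulL φ ψ) f,
    coeFn_mulL φ ψ] with z h1 h2 h3 h4
  rw [h1, h3]
  simp only [Pi.smul_apply, smul_eq_mul, Pi.mul_apply, h2, h4]
  ring

lemma conjL_conjL (φ : Linf) : conjL (conjL φ) = φ := by
  refine Lp.ext ?_
  filter_upwards [coeFn_conjL (conjL φ), coeFn_conjL φ] with z h1 h2
  rw [h1, h2, Complex.conj_conj]

lemma conjL_mulL (φ ψ : Linf) : conjL (mulL φ ψ) = mulL (conjL φ) (conjL ψ) := by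
  refine Lp.ext ?_
  filter_upwards [coeFn_conjL (mulL φ ψ), coeFn_mulL φ ψ, coeFn_mulL (conjL φ) (conjL ψ),
    coeFn_conjL φ, coeFn_conjL ψ] with z h1 h2 h3 h4 h5
  rw [h1, h2, h3]
  simp only [Pi.smul_apply, smul_eq_mul, Pi.mul_apply, h4, h5, map_mul]

lemma Mmul_conjL_Mmul (u : Linf) (hu : ∀ᵐ z ∂μT, ‖u z‖ = 1) (f : L2) :
    Mmul (conjL u) (Mmul u f) = f := by
  refine Lp.ext ?_
  filter_upwards [coeFn_Mmul (conjL u) (Mmul u f), coeFn_Mmul u f, coeFn_conjL u, hu]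
    with z h1 h2 h3 h4
  rw [h1]
  simp only [Pi.smul_apply, smul_eq_mul, Pi.mul_apply, h2, h3]
  rw [← mul_assoc]
  have : (starRingEnd ℂ) (u z) * u z = 1 := by
    rw [mul_comm, Complex.mul_conj]
    norm_cast
    rw [Complex.normSq_eq_norm_sq, h4, one_pow]
  rw [this, one_mul]

end DTTO

namespace DTTO

lemma fourierLp_mem_H2 (n : ℕ) : (fourierLp 2 (n : ℤ) : L2) ∈ H2 :=
  Submodule.le_topologicalClosure _ (Submodule.subset_span ⟨n, rfl⟩)

lemma mem_H2_of_generators (T : L2 →L[ℂ] L2)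
    (h : ∀ n : ℕ, T (fourierLp 2 (n : ℤ)) ∈ H2) : ∀ f ∈ H2, T f ∈ H2 := by
  intro f hf
  have hcl : IsClosed ((H2.comap (T : L2 →ₗ[ℂ] L2)) : Set L2) := by
    have : ((H2.comap (T : L2 →ₗ[ℂ] L2)) : Set L2) = ⇑T ⁻¹' (H2 : Set L2) := rfl
    rw [this]
    exact (Submodule.isClosed_topologicalClosure _).preimage T.continuous
  have hspan : Submodule.span ℂ (Set.range fun n : ℕ => (fourierLp 2 (n : ℤ) : L2))
      ≤ H2.comap (T : L2 →ₗ[ℂ] L2) := by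
    rw [Submodule.span_le]; rintro x ⟨n, rfl⟩; exact h n
  exact Submodule.topologicalClosure_minimal _ hspan hcl hf

lemma Mmul_fourier_top (m n : ℤ) :
    Mmul (fourierLp ⊤ m) (fourierLp 2 n) = (fourierLp 2 (m + n) : L2) := by
  refine Lp.ext ?_
  filter_upwards [coeFn_Mmul (fourierLp ⊤ m) (fourierLp 2 n),
    coeFn_fourierLp ⊤ m, coeFn_fourierLp 2 n, coeFn_fourierLp 2 (m + n)] with z h1 h2 h3 h4
  rw [h1, h4, fourier_add]
  simp only [Pi.smul_apply, smul_eq_mul, Pi.mul_apply, h2, h3]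

lemma Mmul_e1_mem_H2 {f : L2} (hf : f ∈ H2) : Mmul e1 f ∈ H2 := by
  refine mem_H2_of_generators (Mmul e1) (fun n => ?_) f hf
  rw [show e1 = fourierLp ⊤ 1 from rfl, Mmul_fourier_top]
  have : (1 + (n : ℤ)) = ((n + 1 : ℕ) : ℤ) := by push_cast; ring
  rw [this]
  exact fourierLp_mem_H2 (n + 1)

lemma Mmul_mem_H2 {ψ : Linf} (hψ : MemHinf ψ) {f : L2} (hf : f ∈ H2) : Mmul ψ f ∈ H2 := by
  refine mem_H2_of_generators (Mmul ψ) (fun n => ?_) f hf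
  induction n with
  | zero =>
    have h0 : Mmul ψ (fourierLp 2 ((0 : ℕ) : ℤ)) = toL2 ψ := by
      refine Lp.ext ?_
      filter_upwards [coeFn_Mmul ψ (fourierLp 2 ((0 : ℕ) : ℤ)),
        coeFn_fourierLp 2 ((0 : ℕ) : ℤ), coeFn_toL2 ψ] with z h1 h2 h3
      rw [h1, h3]
      simp only [Pi.smul_apply, smul_eq_mul, Pi.mul_apply, Nat.cast_zero] at h2 ⊢
      rw [h2, fourier_zero, mul_one]
    rw [h0]; exact hψ
  | succ n ih =>
    have key : Mmul ψ (fourierLp 2 ((n + 1 : ℕ) : ℤ))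
        = Mmul e1 (Mmul ψ (fourierLp 2 (n : ℤ))) := by
      refine Lp.ext ?_
      filter_upwards [coeFn_Mmul ψ (fourierLp 2 ((n + 1 : ℕ) : ℤ)),
        coeFn_fourierLp 2 ((n + 1 : ℕ) : ℤ),
        coeFn_Mmul e1 (Mmul ψ (fourierLp 2 (n : ℤ))),
        coeFn_Mmul ψ (fourierLp 2 (n : ℤ)),
        coeFn_fourierLp 2 (n : ℤ),
        coeFn_fourierLp ⊤ (1 : ℤ)] with z h1 h2 h3 h4 h5 h6
      rw [h1, h3]
      have he1 : (e1 : 𝕋c → ℂ) z = fourier 1 z := h6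
      simp only [Pi.smul_apply, smul_eq_mul, Pi.mul_apply, h2, h4, h5, he1]
      have : ((n + 1 : ℕ) : ℤ) = 1 + (n : ℤ) := by push_cast; ring
      rw [this, fourier_add]
      ring
    rw [key]
    exact Mmul_e1_mem_H2 ih

lemma uH2_le_H2 {u : Linf} (hu : MemHinf u) : uH2 u ≤ H2 := by
  rintro x ⟨f, hf, rfl⟩
  exact Mmul_mem_H2 hu hf

/-- The multiplication by a unimodular symbol is a linear isometry. -/
def MmulIso (u : Linf) (hu : ∀ᵐ z ∂μT, ‖u z‖ = 1) : L2 →ₗᵢ[ℂ] L2 :=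
  ⟨(Mmul u : L2 →ₗ[ℂ] L2), fun x => norm_Mmul_eq u hu x⟩

lemma completeSpace_uH2 (u : Linf) (hu : ∀ᵐ z ∂μT, ‖u z‖ = 1) :
    CompleteSpace (uH2 u) := by
  have himg : (uH2 u : Set L2) = (MmulIso u hu) '' (H2 : Set L2) := rfl
  have hcompl : IsComplete ((MmulIso u hu) '' (H2 : Set L2)) := by
    rw [LinearIsometry.isComplete_image_iff]
    exact (Submodule.isClosed_topologicalClosure _).isComplete
  have : IsClosed (uH2 u : Set L2) := by rw [himg]; exact hcompl.isClosed
  exact this.completeSpace_coe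

end DTTO

namespace DTTO

lemma Hminus_le_KuP (u : Linf) : Hminus ≤ KuP u :=
  Submodule.orthogonal_le (Ku_le_H2 u)

lemma uH2_le_KuP (u : Linf) : uH2 u ≤ KuP u :=
  le_trans (Submodule.le_orthogonal_orthogonal _)
    (Submodule.orthogonal_le (inf_le_right : Ku u ≤ (uH2 u)ᗮ))

lemma Hminus_le_uH2_orth {u : Linf} (hu : MemHinf u) : Hminus ≤ (uH2 u)ᗮ :=
  Submodule.orthogonal_le (uH2_le_H2 hu)

/-- Decomposition of the projection onto `K_u^⊥` as projections onto `uH²` and `H²₋`. -/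
lemma proj_KuP_eq (u : Linf) [CompleteSpace (uH2 u)] (hu : MemHinf u) (y : L2) :
    (Submodule.orthogonalProjectionOnto (KuP u) y : L2)
      = (Submodule.orthogonalProjectionOnto (uH2 u) y : L2) + (Submodule.orthogonalProjectionOnto Hminus y : L2) := by
  refine Submodule.eq_starProjection_of_mem_orthogonal ?_ ?_
  · exact Submodule.add_mem _ (uH2_le_KuP u (Submodule.orthogonalProjectionOnto (uH2 u) y).2)
      (Hminus_le_KuP u (Submodule.orthogonalProjectionOnto Hminus y).2)
  · have hKu : (KuP u)ᗮ = Ku u := Submodule.orthogonal_orthogonal (Ku u)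
    rw [hKu]
    have hH2 : Hminusᗮ = H2 := Submodule.orthogonal_orthogonal H2
    refine Submodule.mem_inf.2 ⟨?_, ?_⟩
    · have h1 : y - (Submodule.orthogonalProjectionOnto Hminus y : L2) ∈ H2 := by
        rw [← hH2]; exact Submodule.sub_starProjection_mem_orthogonal y
      have h2 : (Submodule.orthogonalProjectionOnto (uH2 u) y : L2) ∈ H2 :=
        uH2_le_H2 hu (Submodule.orthogonalProjectionOnto (uH2 u) y).2
      have := Submodule.sub_mem _ h1 h2
      convert this using 1; abel
    · have h1 : y - (Submodule.orthogonalProjectionOnto (uH2 u) y : L2) ∈ (uH2 u)ᗮ :=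
        Submodule.sub_starProjection_mem_orthogonal y
      have h2 : (Submodule.orthogonalProjectionOnto Hminus y : L2) ∈ (uH2 u)ᗮ :=
        Hminus_le_uH2_orth hu (Submodule.orthogonalProjectionOnto Hminus y).2
      have := Submodule.sub_mem _ h1 h2
      convert this using 1; abel

lemma norm_proj_uH2 (u : Linf) [CompleteSpace (uH2 u)]
    (hu : ∀ᵐ z ∂μT, ‖u z‖ = 1) (y : L2) :
    ‖(Submodule.orthogonalProjectionOnto (uH2 u) y : L2)‖
      = ‖(Submodule.orthogonalProjectionOnto H2 (Mmul (conjL u) y) : L2)‖ := by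
  have heq : (Submodule.orthogonalProjectionOnto (uH2 u) y : L2)
      = Mmul u (Submodule.orthogonalProjectionOnto H2 (Mmul (conjL u) y) : L2) := by
    refine Submodule.eq_starProjection_of_mem_orthogonal ?_ ?_
    · exact ⟨_, (Submodule.orthogonalProjectionOnto H2 (Mmul (conjL u) y)).2, rfl⟩
    · rw [Submodule.mem_orthogonal]
      rintro w ⟨h, hh, rfl⟩
      have hw : ((Mmul u).toLinearMap h : L2) = Mmul u h := rfl
      rw [hw, inner_Mmul_left]
      rw [map_sub, Mmul_conjL_Mmul u hu]
      exact Submodule.inner_right_of_mem_orthogonal hh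
        (Submodule.sub_starProjection_mem_orthogonal _)
  rw [heq, norm_Mmul_eq u hu]

lemma inner_proj_uH2_proj_Hminus (u : Linf) [CompleteSpace (uH2 u)] (hu : MemHinf u)
    (y y' : L2) :
    (inner ℂ ((Submodule.orthogonalProjectionOnto (uH2 u) y : L2)) ((Submodule.orthogonalProjectionOnto Hminus y' : L2)) : ℂ)
      = 0 :=
  Submodule.inner_right_of_mem_orthogonal
    (uH2_le_H2 hu (Submodule.orthogonalProjectionOnto (uH2 u) y).2)
    (Submodule.orthogonalProjectionOnto Hminus y').2

/-- Pythagoras for the projection onto `K_u^⊥`. -/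
lemma norm_proj_KuP_sq (u : Linf) [CompleteSpace (uH2 u)] (hu : IsInnerFn u) (y : L2) :
    ‖(Submodule.orthogonalProjectionOnto (KuP u) y : L2)‖ ^ 2
      = ‖(Submodule.orthogonalProjectionOnto H2 (Mmul (conjL u) y) : L2)‖ ^ 2
        + ‖(Submodule.orthogonalProjectionOnto Hminus y : L2)‖ ^ 2 := by
  rw [proj_KuP_eq u hu.memH2 y]
  have h := norm_add_sq_eq_norm_sq_add_norm_sq_of_inner_eq_zero
    (Submodule.orthogonalProjectionOnto (uH2 u) y : L2) (Submodule.orthogonalProjectionOnto Hminus y : L2)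
    (inner_proj_uH2_proj_Hminus u hu.memH2 y y)
  rw [← norm_proj_uH2 u hu.unimod y]
  nlinarith [h]

end DTTO

namespace DTTO

/-- `B_{φ̄}` norm splits into Toeplitz and Hankel parts. -/
lemma Bop_apply_norm_sq (u : Linf) [CompleteSpace (uH2 u)] (hu : IsInnerFn u)
    (φ : Linf) (f : Ku u) :
    ‖Bop u (conjL φ) f‖ ^ 2
      = ‖(Top (conjL (mulL u φ)) ∘L KuIncl u) f‖ ^ 2
        + ‖(Hop (conjL φ) ∘L KuIncl u) f‖ ^ 2 := by
  have h1 : ‖Bop u (conjL φ) f‖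
      = ‖(Submodule.orthogonalProjectionOnto (KuP u) (Mmul (conjL φ) (f : L2)) : L2)‖ := rfl
  have h3 : ‖(Hop (conjL φ) ∘L KuIncl u) f‖
      = ‖(Submodule.orthogonalProjectionOnto Hminus (Mmul (conjL φ) (f : L2)) : L2)‖ := rfl
  have h2 : ‖(Top (conjL (mulL u φ)) ∘L KuIncl u) f‖
      = ‖(Submodule.orthogonalProjectionOnto H2 (Mmul (conjL (mulL u φ)) (f : L2)) : L2)‖ := rfl
  rw [h1, h2, h3, norm_proj_KuP_sq u hu (Mmul (conjL φ) (f : L2)),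
    Mmul_Mmul, ← conjL_mulL]

/-- The companion operator `C = P_{K_u} M_φ|_{K_u^⊥}`. -/
def Cop (u φ : Linf) : KuP u →L[ℂ] Ku u :=
  Submodule.orthogonalProjectionOnto (Ku u) ∘L Mmul φ ∘L (KuP u).subtypeL

lemma Bop_conj_eq_adjoint (u φ : Linf) :
    Bop u (conjL φ) = ContinuousLinearMap.adjoint (Cop u φ) := by
  rw [ContinuousLinearMap.eq_adjoint_iff]
  intro f g
  have l1 : (inner ℂ (Bop u (conjL φ) f) g : ℂ) = inner ℂ (Mmul (conjL φ) (f : L2)) (g : L2) :=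
    Submodule.inner_orthogonalProjectionOnto_eq_of_mem_right (K := KuP u) g (Mmul (conjL φ) (f : L2))
  have l2 : (inner ℂ f (Cop u φ g) : ℂ) = inner ℂ (f : L2) (Mmul φ (g : L2)) :=
    Submodule.inner_orthogonalProjectionOnto_eq_of_mem_left (K := Ku u) f (Mmul φ (g : L2))
  rw [l1, l2, inner_Mmul_left, conjL_conjL]

lemma norm_Cop_eq_norm_Bop (u φ : Linf) : ‖Cop u φ‖ = ‖Bop u (conjL φ)‖ := by
  rw [Bop_conj_eq_adjoint]
  exact (LinearIsometryEquiv.norm_map ContinuousLinearMap.adjoint (Cop u φ)).symm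

lemma key_pythag (u φ : Linf) (hmod : ∀ᵐ z ∂μT, ‖φ z‖ = 1) (g : KuP u) :
    ‖g‖ ^ 2 = ‖Cop u φ g‖ ^ 2 + ‖Dop u φ g‖ ^ 2 := by
  set x := Mmul φ (g : L2) with hxdef
  have hx : ‖x‖ = ‖g‖ := norm_Mmul_eq φ hmod (g : L2)
  have hsum : (Submodule.orthogonalProjectionOnto (Ku u) x : L2) + (Submodule.orthogonalProjectionOnto (Ku u)ᗮ x : L2)
      = x := Submodule.starProjection_add_starProjection_orthogonal (K := Ku u) x
  have hinner : (inner ℂ ((Submodule.orthogonalProjectionOnto (Ku u) x : L2))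
      ((Submodule.orthogonalProjectionOnto (Ku u)ᗮ x : L2)) : ℂ) = 0 :=
    Submodule.inner_right_of_mem_orthogonal (Submodule.orthogonalProjectionOnto (Ku u) x).2
      (Submodule.orthogonalProjectionOnto (Ku u)ᗮ x).2
  have h := norm_add_sq_eq_norm_sq_add_norm_sq_of_inner_eq_zero _ _ hinner
  rw [hsum] at h
  have e1 : ‖Cop u φ g‖ = ‖(Submodule.orthogonalProjectionOnto (Ku u) x : L2)‖ := rfl
  have e2 : ‖Dop u φ g‖ = ‖(Submodule.orthogonalProjectionOnto (Ku u)ᗮ x : L2)‖ := rfl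
  rw [e1, e2, ← hx]
  nlinarith [h]

lemma exists_unit_KuP (u : Linf) : ∃ x : KuP u, ‖x‖ = 1 := by
  refine ⟨⟨(fourierLp 2 (-1) : L2), Hminus_le_KuP u em1_mem⟩, ?_⟩
  have hcoe := congrFun (coe_fourierBasis (T := 2 * Real.pi))
  have h1 := (fourierBasis (T := 2 * Real.pi)).orthonormal.1 (-1)
  simpa only [hcoe, Submodule.coe_norm] using h1

lemma minMod_Dop_eq (u φ : Linf) (hmod : ∀ᵐ z ∂μT, ‖φ z‖ = 1) :
    minMod (Dop u φ) = Real.sqrt (1 - ‖Cop u φ‖ ^ 2) := by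
  obtain ⟨x0, hx0⟩ := exists_unit_KuP u
  haveI : Nonempty {x : KuP u // ‖x‖ = 1} := ⟨⟨x0, hx0⟩⟩
  have key := key_pythag u φ hmod
  have hbdd : BddBelow (Set.range fun x : {x : KuP u // ‖x‖ = 1} => ‖Dop u φ x.1‖) :=
    ⟨0, by rintro r ⟨x, rfl⟩; exact norm_nonneg _⟩
  set m := minMod (Dop u φ) with hmdef
  have hm0 : (0:ℝ) ≤ m := le_ciInf fun x => norm_nonneg _
  have hm_le_D : ∀ x : {x : KuP u // ‖x‖ = 1}, m ≤ ‖Dop u φ x.1‖ := fun x => ciInf_le hbdd x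
  have hCx_le : ∀ g : KuP u, ‖Cop u φ g‖ ≤ ‖g‖ := fun g => by
    nlinarith [key g, norm_nonneg (Dop u φ g), norm_nonneg (Cop u φ g), norm_nonneg g]
  have hC1 : ‖Cop u φ‖ ≤ 1 :=
    ContinuousLinearMap.opNorm_le_bound _ zero_le_one (fun g => by rw [one_mul]; exact hCx_le g)
  have hC0 : (0:ℝ) ≤ 1 - ‖Cop u φ‖ ^ 2 := by nlinarith [norm_nonneg (Cop u φ)]
  have hm1 : m ≤ 1 := by
    have h1 := hm_le_D ⟨x0, hx0⟩
    have h2 := key x0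
    rw [hx0] at h2
    nlinarith [norm_nonneg (Cop u φ x0), norm_nonneg (Dop u φ x0)]
  refine le_antisymm ?_ ?_
  · -- m ≤ √(1 - ‖C‖²)
    have h1m : (0:ℝ) ≤ 1 - m ^ 2 := by nlinarith
    have hCle : ‖Cop u φ‖ ≤ Real.sqrt (1 - m ^ 2) := by
      refine ContinuousLinearMap.opNorm_le_bound _ (Real.sqrt_nonneg _) (fun g => ?_)
      have hmD : m * ‖g‖ ≤ ‖Dop u φ g‖ := by
        rcases eq_or_ne g 0 with h | h
        · simp [h]
        · have hgn : (0:ℝ) < ‖g‖ := norm_pos_iff.2 h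
          set x : KuP u := ((‖g‖⁻¹ : ℝ) : ℂ) • g with hxdef
          have hcn : ‖((‖g‖⁻¹ : ℝ) : ℂ)‖ = ‖g‖⁻¹ := by
            rw [Complex.norm_real, Real.norm_eq_abs,
              _root_.abs_of_nonneg (inv_nonneg.2 hgn.le)]
          have hx : ‖x‖ = 1 := by
            rw [hxdef, norm_smul, hcn, inv_mul_cancel₀ hgn.ne']
          have h2 := hm_le_D ⟨x, hx⟩
          have hDx : ‖Dop u φ x‖ = ‖g‖⁻¹ * ‖Dop u φ g‖ := by
            rw [hxdef, _root_.map_smul, norm_smul, hcn]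
          rw [hDx] at h2
          calc m * ‖g‖ ≤ (‖g‖⁻¹ * ‖Dop u φ g‖) * ‖g‖ :=
                mul_le_mul_of_nonneg_right h2 (norm_nonneg g)
            _ = ‖Dop u φ g‖ * (‖g‖⁻¹ * ‖g‖) := by ring
            _ = ‖Dop u φ g‖ := by rw [inv_mul_cancel₀ hgn.ne', mul_one]
      have h3 : ‖Cop u φ g‖ ^ 2 ≤ (1 - m ^ 2) * ‖g‖ ^ 2 := by
        nlinarith [key g, mul_self_le_mul_self (mul_nonneg hm0 (norm_nonneg g)) hmD]
      calc ‖Cop u φ g‖ = Real.sqrt (‖Cop u φ g‖ ^ 2) := (Real.sqrt_sq (norm_nonneg _)).symm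
        _ ≤ Real.sqrt ((1 - m ^ 2) * ‖g‖ ^ 2) := Real.sqrt_le_sqrt h3
        _ = Real.sqrt (1 - m ^ 2) * ‖g‖ := by
            rw [Real.sqrt_mul h1m, Real.sqrt_sq (norm_nonneg _)]
    have h4 : ‖Cop u φ‖ ^ 2 ≤ 1 - m ^ 2 := by
      nlinarith [Real.sq_sqrt h1m, Real.sqrt_nonneg (1 - m ^ 2), norm_nonneg (Cop u φ)]
    exact (Real.le_sqrt hm0 hC0).2 (by nlinarith)
  · refine le_ciInf fun x => ?_
    have h := key x.1
    rw [x.2, one_pow] at h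
    have hD : ‖Dop u φ x.1‖ = Real.sqrt (1 - ‖Cop u φ x.1‖ ^ 2) := by
      rw [show (1 : ℝ) - ‖Cop u φ x.1‖ ^ 2 = ‖Dop u φ x.1‖ ^ 2 by nlinarith,
        Real.sqrt_sq (norm_nonneg _)]
    rw [hD]
    apply Real.sqrt_le_sqrt
    have hCx := (Cop u φ).le_opNorm x.1
    rw [x.2, mul_one] at hCx
    nlinarith [norm_nonneg (Cop u φ x.1)]

lemma opNorm_eq_of_norm_eq {E F G : Type*} [NormedAddCommGroup E] [NormedSpace ℂ E]
    [NormedAddCommGroup F] [NormedSpace ℂ F] [NormedAddCommGroup G] [NormedSpace ℂ G]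
    (A : E →L[ℂ] F) (B : E →L[ℂ] G) (h : ∀ x, ‖A x‖ = ‖B x‖) : ‖A‖ = ‖B‖ :=
  le_antisymm
    (A.opNorm_le_bound (norm_nonneg B) fun x => (h x).le.trans (B.le_opNorm x))
    (B.opNorm_le_bound (norm_nonneg A) fun x => ((h x).symm).le.trans (A.le_opNorm x))

end DTTO

namespace DTTO

set_option maxHeartbeats 2000000 in
lemma minMod_eq_Bop (u φ : Linf) [CompleteSpace (uH2 u)]
    (hmod : ∀ᵐ z ∂μT, ‖φ z‖ = 1) :
    minMod (Dop u φ) = Real.sqrt (1 - ‖Bop u (conjL φ)‖ ^ 2) := by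
  rw [minMod_Dop_eq u φ hmod, norm_Cop_eq_norm_Bop]

set_option maxHeartbeats 2000000 in
lemma norm_Bop_sq_eq_sum (u φ : Linf) [CompleteSpace (uH2 u)] (hu : IsInnerFn u)
    (f₀ : Ku u) (hf1 : ‖f₀‖ = 1)
    (hfT : ‖(Top (conjL (mulL u φ)) ∘L KuIncl u) f₀‖ = ‖Top (conjL (mulL u φ)) ∘L KuIncl u‖)
    (hfH : ‖(Hop (conjL φ) ∘L KuIncl u) f₀‖ = ‖Hop (conjL φ) ∘L KuIncl u‖) :
    ‖Bop u (conjL φ)‖ ^ 2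
      = ‖Top (conjL (mulL u φ)) ∘L KuIncl u‖ ^ 2 + ‖Hop (conjL φ) ∘L KuIncl u‖ ^ 2 := by
  have hsplit := Bop_apply_norm_sq u hu φ
  set Tc := Top (conjL (mulL u φ)) ∘L KuIncl u
  set Hc := Hop (conjL φ) ∘L KuIncl u
  have hnn : (0:ℝ) ≤ ‖Tc‖ ^ 2 + ‖Hc‖ ^ 2 := by positivity
  refine le_antisymm ?_ ?_
  · have hb : ‖Bop u (conjL φ)‖ ≤ Real.sqrt (‖Tc‖ ^ 2 + ‖Hc‖ ^ 2) := by
      refine (Bop u (conjL φ)).opNorm_le_bound (Real.sqrt_nonneg _) (fun f => ?_)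
      have h := hsplit f
      have h1 := Tc.le_opNorm f
      have h2 := Hc.le_opNorm f
      have h3 : ‖Bop u (conjL φ) f‖ ^ 2 ≤ (‖Tc‖ ^ 2 + ‖Hc‖ ^ 2) * ‖f‖ ^ 2 := by
        nlinarith [norm_nonneg (Tc f), norm_nonneg (Hc f), norm_nonneg f,
          norm_nonneg Tc, norm_nonneg Hc]
      calc ‖Bop u (conjL φ) f‖
          = Real.sqrt (‖Bop u (conjL φ) f‖ ^ 2) := (Real.sqrt_sq (norm_nonneg _)).symm
        _ ≤ Real.sqrt ((‖Tc‖ ^ 2 + ‖Hc‖ ^ 2) * ‖f‖ ^ 2) := Real.sqrt_le_sqrt h3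
        _ = Real.sqrt (‖Tc‖ ^ 2 + ‖Hc‖ ^ 2) * ‖f‖ := by
            rw [Real.sqrt_mul hnn, Real.sqrt_sq (norm_nonneg _)]
    nlinarith [Real.sq_sqrt hnn, Real.sqrt_nonneg (‖Tc‖ ^ 2 + ‖Hc‖ ^ 2),
      norm_nonneg (Bop u (conjL φ))]
  · have h := hsplit f₀
    have hb := (Bop u (conjL φ)).le_opNorm f₀
    rw [hf1, mul_one] at hb
    rw [← hfT, ← hfH, ← h]
    nlinarith [mul_self_le_mul_self (norm_nonneg (Bop u (conjL φ) f₀)) hb]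

set_option maxHeartbeats 2000000 in
lemma norm_Bop_eq_Hankel (u φ : Linf) [CompleteSpace (uH2 u)] (hu : IsInnerFn u)
    (hT : ∀ f : Ku u, Top (conjL (mulL u φ)) (KuIncl u f) = 0) :
    ‖Bop u (conjL φ)‖ = ‖Hop (conjL φ) ∘L KuIncl u‖ := by
  refine opNorm_eq_of_norm_eq _ _ (fun f => ?_)
  have h := Bop_apply_norm_sq u hu φ f
  have hz : (Top (conjL (mulL u φ)) ∘L KuIncl u) f = 0 := hT f
  rw [hz, norm_zero] at h
  rw [← Real.sqrt_sq (norm_nonneg (Bop u (conjL φ) f)), h]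
  rw [show (0:ℝ) ^ 2 = 0 by norm_num, zero_add, Real.sqrt_sq (norm_nonneg _)]

set_option maxHeartbeats 2000000 in
lemma norm_Bop_eq_Toeplitz (u ψ : Linf) [CompleteSpace (uH2 u)] (hu : IsInnerFn u)
    (hψ : MemHinf ψ) :
    ‖Bop u (conjL (conjL ψ))‖ = ‖Top (mulL (conjL u) ψ) ∘L KuIncl u‖ := by
  have hop : conjL (mulL u (conjL ψ)) = mulL (conjL u) ψ := by
    rw [conjL_mulL, conjL_conjL]
  have hcc : conjL (conjL ψ) = ψ := conjL_conjL ψ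
  refine opNorm_eq_of_norm_eq _ _ (fun f => ?_)
  have h := Bop_apply_norm_sq u hu (conjL ψ) f
  have hHzero : (Hop (conjL (conjL ψ)) ∘L KuIncl u) f = 0 := by
    rw [hcc]
    have hmem : Mmul ψ ((f : L2)) ∈ H2 := Mmul_mem_H2 hψ (Submodule.mem_inf.1 f.2).1
    show Submodule.orthogonalProjectionOnto Hminus (Mmul ψ (f : L2)) = 0
    rw [Submodule.orthogonalProjectionOnto_eq_zero_iff]
    exact Submodule.le_orthogonal_orthogonal H2 hmem
  rw [hHzero, norm_zero, hop] at h
  rw [← Real.sqrt_sq (norm_nonneg (Bop u (conjL (conjL ψ)) f)), h]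
  rw [show (0:ℝ) ^ 2 = 0 by norm_num, add_zero, Real.sqrt_sq (norm_nonneg _)]

end DTTO


namespace DTTO

/-- Special cases where the bounds for `m(D_φ)` (unimodular `φ`) become exact
equalities. -/
theorem minMod_Dphi_special_cases (u φ : Linf) (hu : IsInnerFn u)
    (hnc : Nonconst u) (hmod : ∀ᵐ z ∂μT, ‖φ z‖ = 1) :
    (∀ ψ : Linf, MemHinf ψ → φ = conjL ψ →
        minMod (Dop u φ)
          = Real.sqrt (1 - ‖Top (mulL (conjL u) ψ) ∘L KuIncl u‖ ^ 2))
    ∧ ((∀ f : Ku u, Top (conjL (mulL u φ)) (KuIncl u f) = 0) →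
        minMod (Dop u φ) = Real.sqrt (1 - ‖Hop (conjL φ) ∘L KuIncl u‖ ^ 2))
    ∧ ((∃ f₀ : Ku u, ‖f₀‖ = 1
          ∧ ‖Top (conjL (mulL u φ)) (KuIncl u f₀)‖
              = ‖Top (conjL (mulL u φ)) ∘L KuIncl u‖
          ∧ ‖Hop (conjL φ) (KuIncl u f₀)‖ = ‖Hop (conjL φ) ∘L KuIncl u‖) →
        minMod (Dop u φ)
          = Real.sqrt (1 - (‖Top (conjL (mulL u φ)) ∘L KuIncl u‖ ^ 2
              + ‖Hop (conjL φ) ∘L KuIncl u‖ ^ 2))) := by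
  haveI : CompleteSpace (uH2 u) := completeSpace_uH2 u hu.unimod
  refine ⟨?_, ?_, ?_⟩
  · intro ψ hψ hφψ
    subst hφψ
    rw [minMod_eq_Bop u _ hmod, norm_Bop_eq_Toeplitz u ψ hu hψ]
  · intro hT
    rw [minMod_eq_Bop u φ hmod, norm_Bop_eq_Hankel u φ hu hT]
  · rintro ⟨f₀, hf1, hfT, hfH⟩
    rw [minMod_eq_Bop u φ hmod, norm_Bop_sq_eq_sum u φ hu f₀ hf1 hfT hfH]


end DTTO
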